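/- arXiv:1810.00309 — 2 statements merged into one kernel-verified Lean document; each statement's English description precedes it below -/
import Mathlib

section
/- Let n ≥ 1 and let g(y,p,q) = r(y) + p₁ + Σᵢ₌₂ⁿ (pᵢ + P̃ᵢ(p,q))·y^{2i−2} + Σᵢ₌₁ⁿ Q̃ᵢ(p,q)·y^{2i−1} + φ(y,p,q)·y^{2n} and g′(y,p,q) = r′(y) + p₁ + Σᵢ₌₂ⁿ (pᵢ + P̃ᵢ′(p,q))·y^{2i−2} + Σᵢ₌₁ⁿ Q̃ᵢ′(p,q)·y^{2i−1} + φ′(y,p,q)·y^{2n} be two smooth germs at 0 ∈ ℝ^{2n+1} in normal form, i.e. r(0)=r′(0)=0, dr/dy(0) ≠ 0, dr′/dy(0) ≠ 0, φ(y,0,0)=φ′(y,0,0)=0, ∂Q̃ᵢ/∂qᵢ(0) ≠ 0 and ∂Q̃ᵢ′/∂qᵢ(0) ≠ 0 for i = 1,…,n, P̃ᵢ, P̃ᵢ′ ∈ I_{2i−2} for i = 2,…,n, and Q̃ᵢ, Q̃ᵢ′ ∈ I_{2i−1} for i = 1,…,n. If there exists a local quasi-symplectomorphism Ψ of ω̂₀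 with y∘Ψ = y and g′∘Ψ = g on a neighbourhood of 0, then r = r′, φ = φ′, P̃ᵢ = P̃ᵢ′ (i = 2,…,n) and Q̃ᵢ = Q̃ᵢ′ (i = 1,…,n) as germs at 0. -/
open Filter Topology

noncomputable section

/-- `ℝ^{2n}` with coordinates `(p, q) = (p₁,…,pₙ,q₁,…,qₙ)`. -/
abbrev PQ (n : ℕ) : Type := (Fin n → ℝ) × (Fin n → ℝ)

/-- A smooth germ at `0`: a function which is `C^∞` on some neighbourhood of `0`. -/
def SmoothGerm {E F : Type*} [NormedAddCommGroup E] [NormedSpace ℝ E]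
    [NormedAddCommGroup F] [NormedSpace ℝ F] (f : E → F) : Prop :=
  ∃ U ∈ 𝓝 (0 : E), ContDiffOn ℝ (⊤ : ℕ∞) f U

/-- The standard symplectic form `ω₀ = Σᵢ dpᵢ∧dqᵢ` on `ℝ^{2n}` as a constant
alternating bilinear form. -/
def omega0 (n : ℕ) (u v : PQ n) : ℝ := ∑ i : Fin n, (u.1 i * v.2 i - u.2 i * v.1 i)

/-- A local symplectomorphism of `ω₀`: `Ψ(0) = 0`, smooth near `0`, invertible
derivative, and `DΨ(z)` preserves `ω₀` for all `z` near `0`. -/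
def IsLocalSymp (n : ℕ) (Ψ : PQ n → PQ n) : Prop :=
  Ψ 0 = 0 ∧ SmoothGerm Ψ ∧ Function.Bijective ⇑(fderiv ℝ Ψ 0) ∧
    ∀ᶠ z in 𝓝 (0 : PQ n), ∀ u v : PQ n,
      omega0 n (fderiv ℝ Ψ z u) (fderiv ℝ Ψ z v) = omega0 n u v

/-- The `j`-th generator (0-indexed) of the list `q₁,p₁,q₂,p₂,…,qₙ,pₙ`. -/
def genFun (n j : ℕ) (z : PQ n) : ℝ :=
  if h : j / 2 < n then (if j % 2 = 0 then z.2 ⟨j / 2, h⟩ else z.1 ⟨j / 2, h⟩) else 0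

/-- Membership (as germs at `0`) in the ideal `I_k` generated by the first `k`
functions of the list `q₁,p₁,q₂,p₂,…,qₙ,pₙ`. -/
def InIdeal (n k : ℕ) (g : PQ n → ℝ) : Prop :=
  ∃ c : Fin k → (PQ n → ℝ), (∀ j, SmoothGerm (c j)) ∧
    ∀ᶠ z in 𝓝 (0 : PQ n), g z = ∑ j : Fin k, c j z * genFun n j.1 z

/-- `ℝ^{2n+1}` with coordinates `(y, p, q)`. -/
abbrev YPQ (n : ℕ) : Type := ℝ × PQ n

/-- The standard quasi-symplectic form `ω̂₀ = Σᵢ dpᵢ∧dqᵢ` on `ℝ^{2n+1}`. -/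
def omegaQ (n : ℕ) (u v : YPQ n) : ℝ := omega0 n u.2 v.2

/-- A local quasi-symplectomorphism of `ω̂₀` on `ℝ^{2n+1}`. -/
def IsLocalQuasiSymp (n : ℕ) (Ψ : YPQ n → YPQ n) : Prop :=
  Ψ 0 = 0 ∧ SmoothGerm Ψ ∧ Function.Bijective ⇑(fderiv ℝ Ψ 0) ∧
    ∀ᶠ z in 𝓝 (0 : YPQ n), ∀ u v : YPQ n,
      omegaQ n (fderiv ℝ Ψ z u) (fderiv ℝ Ψ z v) = omegaQ n u v


lemma SmoothGerm.eventually_smooth {E F : Type*} [NormedAddCommGroup E] [NormedSpace ℝ E]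
    [NormedAddCommGroup F] [NormedSpace ℝ F] {f : E → F} (h : SmoothGerm f) :
    ∀ᶠ w in 𝓝 (0 : E), DifferentiableAt ℝ f w ∧ ContinuousAt f w := by
  obtain ⟨U, hU, hcd⟩ := h
  have hint : interior U ∈ 𝓝 (0 : E) := interior_mem_nhds.2 hU
  filter_upwards [hint] with w hw
  have hdiff : DifferentiableAt ℝ f w :=
    ((hcd.mono interior_subset).differentiableOn (by simp)).differentiableAt
      (isOpen_interior.mem_nhds hw)
  exact ⟨hdiff, hdiff.continuousAt⟩

namespace QSI

variable {n : ℕ}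

lemma omega0_qright (u : PQ n) (i : Fin n) :
    omega0 n u (0, Pi.single i 1) = u.1 i := by
  unfold omega0
  rw [Finset.sum_eq_single i]
  · simp
  · intro b _ hb; simp [Pi.single_apply, hb]
  · simp

lemma omega0_pright (u : PQ n) (i : Fin n) :
    omega0 n u (Pi.single i 1, 0) = -(u.2 i) := by
  unfold omega0
  rw [Finset.sum_eq_single i]
  · simp
  · intro b _ hb; simp [Pi.single_apply, hb]
  · simp

lemma omega0_qleft (u : PQ n) (i : Fin n) :
    omega0 n ((0, Pi.single i 1) : PQ n) u = -(u.1 i) := by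
  unfold omega0
  rw [Finset.sum_eq_single i]
  · simp
  · intro b _ hb; simp [Pi.single_apply, hb]
  · simp

lemma omega0_sub_left (u u' v : PQ n) :
    omega0 n (u - u') v = omega0 n u v - omega0 n u' v := by
  unfold omega0
  rw [← Finset.sum_sub_distrib]
  exact Finset.sum_congr rfl fun i _ => by simp; ring

lemma omega0_eq_zero (u : PQ n) (h : ∀ v, omega0 n u v = 0) : u = 0 := by
  have h1 : ∀ i, u.1 i = 0 := fun i => by
    have := h (0, Pi.single i 1); rwa [omega0_qright] at this
  have h2 : ∀ i, u.2 i = 0 := fun i => by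
    have := h (Pi.single i 1, 0); rw [omega0_pright] at this; linarith
  exact Prod.ext (funext h1) (funext h2)

lemma omega0_congr_right (v x x' : PQ n)
    (h : ∀ l, (v.1 l ≠ 0 ∨ v.2 l ≠ 0) → x.1 l = x'.1 l ∧ x.2 l = x'.2 l) :
    omega0 n v x = omega0 n v x' := by
  unfold omega0
  refine Finset.sum_congr rfl fun l _ => ?_
  by_cases h1 : v.1 l = 0
  · by_cases h2 : v.2 l = 0
    · rw [h1, h2]; ring
    · obtain ⟨ha, hb⟩ := h l (Or.inr h2); rw [ha, hb]
  · obtain ⟨ha, hb⟩ := h l (Or.inl h1); rw [ha, hb]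

lemma surj_of_pres (M : PQ n →L[ℝ] PQ n)
    (hM : ∀ u v, omega0 n (M u) (M v) = omega0 n u v) :
    Function.Surjective M := by
  have hinj : Function.Injective M := by
    intro a b hab
    have hz : ∀ v, omega0 n (a - b) v = 0 := by
      intro v
      rw [omega0_sub_left, ← hM a v, ← hM b v, hab, sub_self]
    have := omega0_eq_zero _ hz
    exact sub_eq_zero.1 this
  have : Function.Injective (M : PQ n →ₗ[ℝ] PQ n) := hinj
  exact LinearMap.injective_iff_surjective.1 this

lemma fixes_subspace (M : PQ n →L[ℝ] PQ n)
    (hM : ∀ u v, omega0 n (M u) (M v) = omega0 n u v) (m : ℕ)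
    (hfix : ∀ u : PQ n, ∀ l : Fin n, (l : ℕ) < m → (M u).1 l = u.1 l ∧ (M u).2 l = u.2 l)
    (v : PQ n) (hv : ∀ l : Fin n, m ≤ (l : ℕ) → v.1 l = 0 ∧ v.2 l = 0) :
    M v = v := by
  have hs := surj_of_pres M hM
  have key : ∀ w, omega0 n (M v - v) w = 0 := by
    intro w
    obtain ⟨u, rfl⟩ := hs w
    rw [omega0_sub_left, hM]
    have : omega0 n v (M u) = omega0 n v u := by
      apply omega0_congr_right
      intro l hl
      have hlm : (l : ℕ) < m := by
        by_contra hc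
        obtain ⟨h1, h2⟩ := hv l (by omega)
        rcases hl with h | h <;> [exact h h1; exact h h2]
      obtain ⟨h1, h2⟩ := hfix u l hlm
      exact ⟨h1, h2⟩
    rw [this, sub_self]
  exact sub_eq_zero.1 (omega0_eq_zero _ key)

lemma Mq_eq_one (M : PQ n →L[ℝ] PQ n)
    (hM : ∀ u v, omega0 n (M u) (M v) = omega0 n u v) (i : Fin n)
    (hpi : ∀ u, (M u).1 i = u.1 i) :
    (M (0, Pi.single i 1)).2 i = 1 := by
  obtain ⟨u, hu⟩ := surj_of_pres M hM ((Pi.single i 1, 0) : PQ n)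
  have h1 := hM ((0, Pi.single i 1) : PQ n) u
  rw [hu, omega0_pright, omega0_qleft] at h1
  have h2 : u.1 i = 1 := by
    have := hpi u; rw [hu] at this; simpa using this.symm
  rw [h2] at h1; linarith

/-- `genFun` as a continuous linear map. -/
def genCLM (n j : ℕ) : PQ n →L[ℝ] ℝ :=
  if h : j / 2 < n then
    (if j % 2 = 0 then
      (ContinuousLinearMap.proj (⟨j / 2, h⟩ : Fin n)).comp
        (ContinuousLinearMap.snd ℝ (Fin n → ℝ) (Fin n → ℝ))
     else
      (ContinuousLinearMap.proj (⟨j / 2, h⟩ : Fin n)).comp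
        (ContinuousLinearMap.fst ℝ (Fin n → ℝ) (Fin n → ℝ)))
  else 0

lemma genFun_eq_clm (j : ℕ) (z : PQ n) : genFun n j z = genCLM n j z := by
  unfold genFun genCLM
  split_ifs <;> rfl

lemma genFun_congr {w w' : PQ n} {j m : ℕ} (hj : j < 2 * m)
    (h : ∀ l : Fin n, (l : ℕ) < m → w.1 l = w'.1 l ∧ w.2 l = w'.2 l) :
    genFun n j w = genFun n j w' := by
  unfold genFun
  split_ifs with h1 h2
  · exact (h ⟨j / 2, h1⟩ (by simp only [Fin.val_mk]; omega)).2
  · exact (h ⟨j / 2, h1⟩ (by simp only [Fin.val_mk]; omega)).1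
  · rfl

lemma genFun_zero (j : ℕ) : genFun n j (0 : PQ n) = 0 := by
  unfold genFun; split_ifs <;> simp

lemma genFun_eq_zero {w : PQ n} {j m : ℕ} (hj : j < 2 * m)
    (h : ∀ l : Fin n, (l : ℕ) < m → w.1 l = 0 ∧ w.2 l = 0) :
    genFun n j w = 0 := by
  rw [genFun_congr hj (w' := 0) (fun l hl => by simpa using h l hl)]
  exact genFun_zero j

lemma genFun_two_mul (i : Fin n) (w : PQ n) : genFun n (2 * (i : ℕ)) w = w.2 i := by
  unfold genFun
  have h1 : 2 * (i : ℕ) / 2 = (i : ℕ) := by omega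
  have h2 : 2 * (i : ℕ) % 2 = 0 := by omega
  rw [dif_pos (by omega : 2 * (i : ℕ) / 2 < n), if_pos h2]
  simp_rw [h1]

lemma genFun_single (i : Fin n) {j m : ℕ} (hm : m = (i : ℕ)) (hj : j < 2 * m + 1) :
    genFun n j ((0, Pi.single i 1) : PQ n) = if j = 2 * m then 1 else 0 := by
  subst hm
  rcases eq_or_ne j (2 * (i : ℕ)) with rfl | hne
  · rw [genFun_two_mul, if_pos rfl]; simp
  · rw [if_neg hne]
    unfold genFun
    split_ifs with h1 h2
    · have : (⟨j / 2, h1⟩ : Fin n) ≠ i := by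
        intro hc
        have : j / 2 = (i : ℕ) := by simpa [Fin.ext_iff] using hc
        omega
      simp [Pi.single_apply, this]
    · rfl
    · rfl

/-- Constancy along a direction where the derivative vanishes. -/
lemma const_dir {E F : Type*} [NormedAddCommGroup E] [NormedSpace ℝ E]
    [NormedAddCommGroup F] [NormedSpace ℝ F]
    {f : E → F} {f' : E → E →L[ℝ] F} {s : Set E} (hc : Convex ℝ s)
    (hd : ∀ w ∈ s, HasFDerivAt f (f' w) w)
    {x y : E} (hx : x ∈ s) (hy : y ∈ s)
    (hz : ∀ w ∈ s, f' w (y - x) = 0) :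
    f y = f x := by
  set γ : ℝ → F := fun t => f (x + t • (y - x)) with hγ
  have hmem : ∀ t ∈ Set.Icc (0 : ℝ) 1, x + t • (y - x) ∈ s := by
    intro t ht
    have heq : x + t • (y - x) = (1 - t) • x + t • y := by
      rw [smul_sub, sub_smul, one_smul]; abel
    rw [heq]
    exact hc hx hy (by linarith [ht.2]) ht.1 (by ring)
  have hder : ∀ t ∈ Set.Icc (0 : ℝ) 1, HasDerivAt γ 0 t := by
    intro t ht
    have hL : HasDerivAt (fun t : ℝ => x + t • (y - x)) (y - x) t := by
      simpa using ((hasDerivAt_id t).smul_const (y - x)).const_add x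
    have := (hd _ (hmem t ht)).comp_hasDerivAt t hL
    exact (by simpa [hz _ (hmem t ht)] using this : HasDerivAt (f ∘ fun t => x + t • (y - x)) 0 t)
  have hcont : ContinuousOn γ (Set.Icc (0 : ℝ) 1) :=
    fun t ht => ((hder t ht).continuousAt).continuousWithinAt
  have key := constant_of_has_deriv_right_zero hcont
    (fun t ht => ((hder t (Set.mem_Icc_of_Ico ht)).hasDerivWithinAt))
  have h1 := key 1 ⟨zero_le_one, le_refl 1⟩
  simpa [hγ] using h1

/-- Pairing up a sum over `range (2*n)`. -/
lemma sum_pairs (m : ℕ) (f : ℕ → ℝ) :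
    ∑ k ∈ Finset.range (2 * m), f k = ∑ i ∈ Finset.range m, (f (2 * i) + f (2 * i + 1)) := by
  induction m with
  | zero => simp
  | succ m ih =>
    have : 2 * (m + 1) = (2 * m + 1) + 1 := by ring
    rw [this, Finset.sum_range_succ, Finset.sum_range_succ, ih, Finset.sum_range_succ]
    ring

/-- Extraction of polynomial coefficients. -/
lemma poly_cancel {ε : ℝ} (hε : 0 < ε) :
    ∀ (m : ℕ) (c : ℕ → ℝ) (ρ : ℝ → ℝ), ContinuousOn ρ (Set.Ioo (-ε) ε) →
    (∀ y ∈ Set.Ioo (-ε) ε, (∑ k ∈ Finset.range m, c k * y ^ k) + ρ y * y ^ m = 0) →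
    (∀ k < m, c k = 0) ∧ (∀ y ∈ Set.Ioo (-ε) ε, ρ y = 0) := by
  intro m
  induction m with
  | zero =>
    intro c ρ hρ h
    exact ⟨fun k hk => absurd hk (by omega), fun y hy => by simpa using h y hy⟩
  | succ m ih =>
    intro c ρ hρ h
    have h0 : (0 : ℝ) ∈ Set.Ioo (-ε) ε := ⟨by linarith, hε⟩
    have hc0 : c 0 = 0 := by
      have := h 0 h0
      simpa [Finset.sum_range_succ'] using this
    set σ : ℝ → ℝ := fun y => (∑ k ∈ Finset.range m, c (k + 1) * y ^ k) + ρ y * y ^ m with hσdef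
    have hσcont : ContinuousOn σ (Set.Ioo (-ε) ε) := by
      apply ContinuousOn.add
      · exact (continuous_finset_sum _ fun k _ =>
          (continuous_const.mul (continuous_pow k))).continuousOn
      · exact hρ.mul (continuous_pow m).continuousOn
    have hfac : ∀ y ∈ Set.Ioo (-ε) ε, y * σ y = 0 := by
      intro y hy
      have hh := h y hy
      rw [Finset.sum_range_succ'] at hh
      have : y * σ y = (∑ k ∈ Finset.range m, c (k + 1) * y ^ (k + 1)) + ρ y * y ^ (m + 1) := by
        rw [hσdef]
        simp only [mul_add, Finset.mul_sum]
        congr 1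
        · exact Finset.sum_congr rfl fun k _ => by ring
        · ring
      rw [this]
      rw [hc0] at hh
      simpa using hh
    have hσ0 : ∀ y ∈ Set.Ioo (-ε) ε, σ y = 0 := by
      intro y hy
      rcases eq_or_ne y 0 with rfl | hy0
      · -- limit argument at 0
        have hsub : Set.Ioo (0 : ℝ) ε ⊆ Set.Ioo (-ε) ε \ {0} := by
          intro t ht
          exact ⟨⟨by linarith [ht.1], ht.2⟩, by simp; linarith [ht.1]⟩
        have hne : (𝓝[Set.Ioo (-ε) ε \ {0}] (0 : ℝ)).NeBot := by
          have h1 : (𝓝[Set.Ioo (0 : ℝ) ε] (0 : ℝ)).NeBot := by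
            rw [← mem_closure_iff_nhdsWithin_neBot]
            rw [closure_Ioo (by linarith : (0:ℝ) ≠ ε)]
            exact ⟨le_refl 0, le_of_lt hε⟩
          exact h1.mono (nhdsWithin_mono _ hsub)
        have ht1 : Filter.Tendsto σ (𝓝[Set.Ioo (-ε) ε \ {0}] (0 : ℝ)) (𝓝 (σ 0)) :=
          (hσcont 0 h0).mono_left (nhdsWithin_mono _ Set.diff_subset)
        have ht2 : Filter.Tendsto σ (𝓝[Set.Ioo (-ε) ε \ {0}] (0 : ℝ)) (𝓝 0) := by
          apply Filter.Tendsto.congr' _ tendsto_const_nhds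
          filter_upwards [self_mem_nhdsWithin] with t ht
          have := hfac t ht.1
          have ht0 : t ≠ 0 := by simpa using ht.2
          exact ((mul_eq_zero.1 this).resolve_left ht0).symm
        exact tendsto_nhds_unique ht1 ht2
      · have := hfac y hy
        exact (mul_eq_zero.1 this).resolve_left hy0
    obtain ⟨h1, h2⟩ := ih (fun k => c (k + 1)) ρ hρ hσ0
    refine ⟨fun k hk => ?_, h2⟩
    cases k with
    | zero => exact hc0
    | succ k' => exact h1 k' (by omega)


lemma omega0_zero_left (v : PQ n) : omega0 n 0 v = 0 := by simp [omega0]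

lemma norm_mask_le (z : PQ n) (P Q : Fin n → Prop) [DecidablePred P] [DecidablePred Q] :
    ‖((fun l => if P l then 0 else z.1 l, fun l => if Q l then 0 else z.2 l) : PQ n)‖ ≤ ‖z‖ := by
  rw [Prod.norm_def, Prod.norm_def]
  refine max_le_max ?_ ?_ <;>
  · rw [pi_norm_le_iff_of_nonneg (norm_nonneg _)]
    intro l
    dsimp only
    split_ifs
    · simpa using norm_nonneg _
    · exact norm_le_pi_norm _ l

end QSI

open QSI

set_option maxHeartbeats 2000000 in
/-- the data `r, φ, P̃ᵢ, Q̃ᵢ` of the quasi-symplectic normal form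
(Lemma 3 of the paper) are functional invariants: if a local
quasi-symplectomorphism preserving `y` transforms one normal form into another,
the corresponding invariants coincide as germs at `0`. -/
theorem quasi_symplectic_invariants (n : ℕ) (hn : 1 ≤ n)
    (r r' : ℝ → ℝ) (φ φ' : YPQ n → ℝ) (Pt Qt Pt' Qt' : Fin n → (PQ n → ℝ))
    (hrsm : SmoothGerm r) (hrsm' : SmoothGerm r')
    (hφsm : SmoothGerm φ) (hφsm' : SmoothGerm φ')
    (hPsm : ∀ i, SmoothGerm (Pt i)) (hQsm : ∀ i, SmoothGerm (Qt i))
    (hPsm' : ∀ i, SmoothGerm (Pt' i)) (hQsm' : ∀ i, SmoothGerm (Qt' i))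
    (hr0 : r 0 = 0) (hr0' : r' 0 = 0)
    (hrd : deriv r 0 ≠ 0) (hrd' : deriv r' 0 ≠ 0)
    (hφ0 : ∀ᶠ y in 𝓝 (0 : ℝ), φ (y, 0) = 0)
    (hφ0' : ∀ᶠ y in 𝓝 (0 : ℝ), φ' (y, 0) = 0)
    (hPt0 : Pt ⟨0, hn⟩ = 0) (hPt0' : Pt' ⟨0, hn⟩ = 0)
    (hQd : ∀ i : Fin n, fderiv ℝ (Qt i) 0 ((0, Pi.single i 1) : PQ n) ≠ 0)
    (hQd' : ∀ i : Fin n, fderiv ℝ (Qt' i) 0 ((0, Pi.single i 1) : PQ n) ≠ 0)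
    (hPI : ∀ i : Fin n, InIdeal n (2 * i.1) (Pt i))
    (hQI : ∀ i : Fin n, InIdeal n (2 * i.1 + 1) (Qt i))
    (hPI' : ∀ i : Fin n, InIdeal n (2 * i.1) (Pt' i))
    (hQI' : ∀ i : Fin n, InIdeal n (2 * i.1 + 1) (Qt' i))
    (g g' : YPQ n → ℝ)
    (hgdef : ∀ w : YPQ n, g w = r w.1
      + ∑ i : Fin n, ((w.2.1 i + Pt i w.2) * w.1 ^ (2 * i.1)
          + Qt i w.2 * w.1 ^ (2 * i.1 + 1))
      + φ w * w.1 ^ (2 * n))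
    (hgdef' : ∀ w : YPQ n, g' w = r' w.1
      + ∑ i : Fin n, ((w.2.1 i + Pt' i w.2) * w.1 ^ (2 * i.1)
          + Qt' i w.2 * w.1 ^ (2 * i.1 + 1))
      + φ' w * w.1 ^ (2 * n))
    (Ψ : YPQ n → YPQ n) (hΨ : IsLocalQuasiSymp n Ψ)
    (hy : ∀ᶠ z in 𝓝 (0 : YPQ n), (Ψ z).1 = z.1)
    (hconj : ∀ᶠ z in 𝓝 (0 : YPQ n), g' (Ψ z) = g z) :
    (∀ᶠ y in 𝓝 (0 : ℝ), r y = r' y) ∧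
      (∀ᶠ w in 𝓝 (0 : YPQ n), φ w = φ' w) ∧
      (∀ i : Fin n, ∀ᶠ w in 𝓝 (0 : PQ n), Pt i w = Pt' i w) ∧
      (∀ i : Fin n, ∀ᶠ w in 𝓝 (0 : PQ n), Qt i w = Qt' i w) := by
  classical
  obtain ⟨hΨ0, hΨsm, -, hΨω⟩ := hΨ
  choose cP hcPsm hcPrep using hPI
  choose cQ hcQsm hcQrep using hQI
  choose cP' hcP'sm hcP'rep using hPI'
  choose cQ' hcQ'sm hcQ'rep using hQI'
  have hPt_zero : ∀ i, Pt i 0 = 0 := fun i => by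
    simpa [genFun_zero] using (hcPrep i).self_of_nhds
  have hQt_zero : ∀ i, Qt i 0 = 0 := fun i => by
    simpa [genFun_zero] using (hcQrep i).self_of_nhds
  have hPt'_zero : ∀ i, Pt' i 0 = 0 := fun i => by
    simpa [genFun_zero] using (hcP'rep i).self_of_nhds
  have hQt'_zero : ∀ i, Qt' i 0 = 0 := fun i => by
    simpa [genFun_zero] using (hcQ'rep i).self_of_nhds
  have hsm2 := hΨsm.eventually_smooth
  obtain ⟨ε₁, hε₁pos, hB₁⟩ :=
    Metric.eventually_nhds_iff.1 (hy.and (hconj.and (hΨω.and hsm2)))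
  have hB1 : ∀ w : YPQ n, ‖w‖ < ε₁ → ((Ψ w).1 = w.1 ∧ (g' (Ψ w) = g w ∧
      ((∀ u v, omegaQ n (fderiv ℝ Ψ w u) (fderiv ℝ Ψ w v) = omegaQ n u v) ∧
        (DifferentiableAt ℝ Ψ w ∧ ContinuousAt Ψ w)))) :=
    fun w hw => hB₁ (by rwa [dist_zero_right])
  -- the y-derivative of the fibre part of Ψ vanishes
  have hyzero : ∀ w : YPQ n, ‖w‖ < ε₁ → (fderiv ℝ Ψ w (((1:ℝ), 0) : YPQ n)).2 = 0 := by
    intro w hw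
    obtain ⟨-, -, hω, -⟩ := hB1 w hw
    set T : PQ n →L[ℝ] PQ n :=
      (ContinuousLinearMap.snd ℝ ℝ (PQ n)).comp
        ((fderiv ℝ Ψ w).comp (ContinuousLinearMap.inr ℝ ℝ (PQ n))) with hTdef
    have hT : ∀ u v, omega0 n (T u) (T v) = omega0 n u v := by
      intro u v
      have h := hω ((0:ℝ), u) ((0:ℝ), v)
      simpa [hTdef, omegaQ, ContinuousLinearMap.comp_apply, ContinuousLinearMap.inr_apply,
        ContinuousLinearMap.coe_snd'] using h
    apply omega0_eq_zero
    intro v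
    obtain ⟨u, rfl⟩ := surj_of_pres T hT v
    have h := hω (((1:ℝ), 0) : YPQ n) ((0:ℝ), u)
    simpa [hTdef, omegaQ, omega0_zero_left, ContinuousLinearMap.comp_apply,
      ContinuousLinearMap.inr_apply, ContinuousLinearMap.coe_snd'] using h
  -- the fibre map
  set ψ : PQ n → PQ n := fun z => (Ψ ((0:ℝ), z)).2 with hψdef
  have hψ0 : ψ 0 = 0 := by
    have h0 : (((0:ℝ), (0:PQ n)) : YPQ n) = 0 := rfl
    show (Ψ ((0:ℝ), (0:PQ n))).2 = 0
    rw [h0, hΨ0]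
    rfl
  have hsplit : ∀ w : YPQ n, ‖w‖ < ε₁ → Ψ w = (w.1, ψ w.2) := by
    intro w hw
    have hx : ‖(((0:ℝ), w.2) : YPQ n)‖ < ε₁ := by
      refine lt_of_le_of_lt ?_ hw
      rw [Prod.norm_def, Prod.norm_def]
      exact max_le_max (by simpa using norm_nonneg w.1) le_rfl
    have hz : ∀ v ∈ Metric.ball (0 : YPQ n) ε₁,
        ((ContinuousLinearMap.snd ℝ ℝ (PQ n)).comp (fderiv ℝ Ψ v)) (w - ((0:ℝ), w.2)) = 0 := by
      intro v hv
      rw [Metric.mem_ball, dist_zero_right] at hv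
      have he : w - (((0:ℝ), w.2) : YPQ n) = w.1 • (((1:ℝ), 0) : YPQ n) := by
        refine Prod.ext ?_ ?_ <;> simp
      rw [he, map_smul, ContinuousLinearMap.comp_apply]
      simp [hyzero v hv]
    have hcd := const_dir (f := fun v : YPQ n => (Ψ v).2)
      (f' := fun v => (ContinuousLinearMap.snd ℝ ℝ (PQ n)).comp (fderiv ℝ Ψ v))
      (s := Metric.ball (0 : YPQ n) ε₁) (convex_ball 0 ε₁)
      (fun v hv => (ContinuousLinearMap.snd ℝ ℝ (PQ n)).hasFDerivAt.comp v
        ((hB1 v (by rwa [Metric.mem_ball, dist_zero_right] at hv)).2.2.2.1.hasFDerivAt))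
      (x := ((0:ℝ), w.2)) (y := w)
      (by rw [Metric.mem_ball, dist_zero_right]; exact hx)
      (by rw [Metric.mem_ball, dist_zero_right]; exact hw) hz
    exact Prod.ext (hB1 w hw).1 hcd
  have hPp : ∀ z : PQ n, ‖z‖ < ε₁ → ‖(((0:ℝ), z) : YPQ n)‖ < ε₁ := by
    intro z hz
    rw [Prod.norm_def]
    simpa using hz
  set Dψ : PQ n → (PQ n →L[ℝ] PQ n) := fun z =>
    (ContinuousLinearMap.snd ℝ ℝ (PQ n)).comp
      ((fderiv ℝ Ψ ((0:ℝ), z)).comp (ContinuousLinearMap.inr ℝ ℝ (PQ n))) with hDψdef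
  have hψd : ∀ z : PQ n, ‖z‖ < ε₁ → HasFDerivAt ψ (Dψ z) z := by
    intro z hz
    have hdiff : HasFDerivAt Ψ (fderiv ℝ Ψ ((0:ℝ), z))
        ((ContinuousLinearMap.inr ℝ ℝ (PQ n)) z) :=
      ((hB1 _ (hPp z hz)).2.2.2.1).hasFDerivAt
    have h1 := hdiff.comp z (ContinuousLinearMap.inr ℝ ℝ (PQ n)).hasFDerivAt
    exact (ContinuousLinearMap.snd ℝ ℝ (PQ n)).hasFDerivAt.comp z h1
  have hψω : ∀ z : PQ n, ‖z‖ < ε₁ → ∀ u v, omega0 n (Dψ z u) (Dψ z v) = omega0 n u v := by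
    intro z hz u v
    have h := (hB1 _ (hPp z hz)).2.2.1 ((0:ℝ), u) ((0:ℝ), v)
    simpa [hDψdef, omegaQ, ContinuousLinearMap.comp_apply, ContinuousLinearMap.inr_apply,
      ContinuousLinearMap.coe_snd'] using h
  have hconj2 : ∀ y : ℝ, ∀ z : PQ n, |y| < ε₁ → ‖z‖ < ε₁ → g' (y, ψ z) = g (y, z) := by
    intro y z hya hz
    have hw : ‖((y, z) : YPQ n)‖ < ε₁ := by
      rw [Prod.norm_def]
      exact max_lt (by simpa [Real.norm_eq_abs] using hya) hz
    have h := (hB1 _ hw).2.1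
    rw [hsplit _ hw] at h
    simpa using h
  -- r = r'
  obtain ⟨εr, hεrpos, hφ0r⟩ := Metric.eventually_nhds_iff.1 (hφ0.and hφ0')
  have hrr' : ∀ y : ℝ, |y| < min ε₁ εr → r y = r' y := by
    intro y hya
    have hy1 : |y| < ε₁ := lt_of_lt_of_le hya (min_le_left _ _)
    have hyr : dist y 0 < εr := by
      rw [Real.dist_eq, sub_zero]; exact lt_of_lt_of_le hya (min_le_right _ _)
    have h := hconj2 y 0 hy1 (by simpa using hε₁pos)
    rw [hψ0, hgdef, hgdef'] at h
    simp only [Prod.fst_zero, Prod.snd_zero, Pi.zero_apply] at h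
    rw [(hφ0r hyr).1, (hφ0r hyr).2] at h
    simp only [hPt_zero, hQt_zero, hPt'_zero, hQt'_zero, add_zero, zero_add, zero_mul,
      mul_zero, Finset.sum_const_zero] at h
    linarith
  -- nonvanishing of the top coefficient of Qt'
  have hc'0 : ∀ i : Fin n, cQ' i ⟨2 * i.1, by omega⟩ 0 ≠ 0 := by
    intro i
    have hfd : fderiv ℝ (Qt' i) 0 =
        fderiv ℝ (fun z => ∑ j : Fin (2 * i.1 + 1), cQ' i j z * genFun n j.1 z) 0 :=
      Filter.EventuallyEq.fderiv_eq (hcQ'rep i)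
    have hterm : ∀ j : Fin (2 * i.1 + 1), HasFDerivAt (fun z : PQ n => cQ' i j z * genFun n j.1 z)
        (cQ' i j 0 • genCLM n j.1 + genFun n j.1 0 • fderiv ℝ (cQ' i j) 0) 0 := by
      intro j
      have h1 : HasFDerivAt (cQ' i j) (fderiv ℝ (cQ' i j) 0) 0 :=
        ((hcQ'sm i j).eventually_smooth.self_of_nhds).1.hasFDerivAt
      have h2 : HasFDerivAt (fun z : PQ n => genFun n j.1 z) (genCLM n j.1) 0 := by
        have he : (fun z : PQ n => genFun n j.1 z) = ⇑(genCLM n j.1) :=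
          funext fun z => genFun_eq_clm j.1 z
        rw [he]; exact (genCLM n j.1).hasFDerivAt
      exact h1.mul h2
    have hsum := HasFDerivAt.fun_sum (u := Finset.univ) (fun j _ => hterm j)
    have h := hQd' i
    rw [hfd, hsum.fderiv, ContinuousLinearMap.sum_apply] at h
    have hj0 : ∀ j : Fin (2 * i.1 + 1),
        (cQ' i j 0 • genCLM n j.1 + genFun n j.1 0 • fderiv ℝ (cQ' i j) 0)
          ((0, Pi.single i 1) : PQ n) = cQ' i j 0 * (if j.1 = 2 * i.1 then 1 else 0) := by
      intro j
      rw [ContinuousLinearMap.add_apply, ContinuousLinearMap.smul_apply,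
        ContinuousLinearMap.smul_apply, genFun_zero, zero_smul, add_zero, smul_eq_mul]
      congr 1
      rw [← genFun_eq_clm, genFun_single i rfl j.2]
    rw [Finset.sum_congr rfl (fun j _ => hj0 j),
      Finset.sum_eq_single (⟨2 * i.1, by omega⟩ : Fin (2 * i.1 + 1))] at h
    · simpa using h
    · intro b _ hb
      have hb' : (b : ℕ) ≠ 2 * i.1 := fun hc => hb (Fin.ext hc)
      simp [hb']
    · intro hmem; exact absurd (Finset.mem_univ _) hmem
  -- target-side radius δ
  have hprimedAll : ∀ᶠ w in 𝓝 (0 : PQ n), ∀ i : Fin n,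
      (Pt' i w = ∑ j : Fin (2 * i.1), cP' i j w * genFun n j.1 w) ∧
      (Qt' i w = ∑ j : Fin (2 * i.1 + 1), cQ' i j w * genFun n j.1 w) ∧
      cQ' i ⟨2 * i.1, by omega⟩ w ≠ 0 := by
    rw [eventually_all]
    intro i
    have hcont : ContinuousAt (cQ' i ⟨2 * i.1, by omega⟩) 0 :=
      ((hcQ'sm i ⟨2 * i.1, by omega⟩).eventually_smooth.self_of_nhds).2
    filter_upwards [hcP'rep i, hcQ'rep i, hcont.eventually_ne (hc'0 i)] with w h1 h2 h3
    exact ⟨h1, h2, h3⟩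
  obtain ⟨δ, hδpos, hδ⟩ := Metric.eventually_nhds_iff.1 hprimedAll
  -- continuity radius for φ'
  obtain ⟨εφ', hεφ'pos, hφ'c⟩ := Metric.eventually_nhds_iff.1 hφsm'.eventually_smooth
  obtain ⟨εφ, hεφpos, hφc⟩ := Metric.eventually_nhds_iff.1 hφsm.eventually_smooth
  set δ' := min δ εφ' with hδ'def
  have hδ'pos : 0 < δ' := lt_min hδpos hεφ'pos
  -- source-side radius
  have hψcont : ContinuousAt ψ 0 := (hψd 0 (by simpa using hε₁pos)).differentiableAt.continuousAt
  have hmap' : ∀ᶠ z in 𝓝 (0 : PQ n), ψ z ∈ Metric.ball (0 : PQ n) δ' := by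
    have hmem : Metric.ball (0 : PQ n) δ' ∈ 𝓝 (ψ 0) := by
      rw [hψ0]; exact Metric.ball_mem_nhds _ hδ'pos
    exact hψcont hmem
  have hsrcAll : ∀ᶠ z in 𝓝 (0 : PQ n), ∀ i : Fin n,
      (Pt i z = ∑ j : Fin (2 * i.1), cP i j z * genFun n j.1 z) ∧
      (Qt i z = ∑ j : Fin (2 * i.1 + 1), cQ i j z * genFun n j.1 z) :=
    eventually_all.2 fun i => (hcPrep i).and (hcQrep i)
  obtain ⟨εsrc, hεsrcpos, hsrc⟩ := Metric.eventually_nhds_iff.1 (hsrcAll.and hmap')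
  set ε₃ := min ε₁ εr with hε₃def
  have hε₃pos : 0 < ε₃ := lt_min hε₁pos hεrpos
  set ε₄ := min (min ε₃ εsrc) (min εφ δ') with hε₄def
  have hε₄pos : 0 < ε₄ := lt_min (lt_min hε₃pos hεsrcpos) (lt_min hεφpos hδ'pos)
  have h43 : ε₄ ≤ ε₃ := le_trans (min_le_left _ _) (min_le_left _ _)
  have h31 : ε₃ ≤ ε₁ := min_le_left _ _
  have h41 : ε₄ ≤ ε₁ := le_trans h43 h31
  have h4src : ε₄ ≤ εsrc := le_trans (min_le_left _ _) (min_le_right _ _)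
  have h4φ : ε₄ ≤ εφ := le_trans (min_le_right _ _) (min_le_left _ _)
  have h4δ' : ε₄ ≤ δ' := le_trans (min_le_right _ _) (min_le_right _ _)
  have hδ'δ : δ' ≤ δ := min_le_left _ _
  have hδ'φ' : δ' ≤ εφ' := min_le_right _ _
  -- coefficient extraction
  have hext : ∀ z : PQ n, ‖z‖ < ε₄ →
      ((∀ i : Fin n, ((ψ z).1 i + Pt' i (ψ z) = z.1 i + Pt i z) ∧ Qt' i (ψ z) = Qt i z) ∧
        (∀ y : ℝ, |y| < ε₄ → φ (y, z) = φ' (y, ψ z))) := by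
    intro z hz
    have hzsrc : dist z 0 < εsrc := by rw [dist_zero_right]; exact lt_of_lt_of_le hz h4src
    have hψzδ' : ‖ψ z‖ < δ' := by
      have := (hsrc hzsrc).2
      rwa [Metric.mem_ball, dist_zero_right] at this
    set A : Fin n → ℝ := fun i => (z.1 i + Pt i z) - ((ψ z).1 i + Pt' i (ψ z)) with hA
    set Bc : Fin n → ℝ := fun i => Qt i z - Qt' i (ψ z) with hBc
    set ρ : ℝ → ℝ := fun y => φ (y, z) - φ' (y, ψ z) with hρ
    set c : ℕ → ℝ := fun k =>
      if hk : k / 2 < n then (if k % 2 = 0 then A ⟨k / 2, hk⟩ else Bc ⟨k / 2, hk⟩) else 0 with hcdef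
    have hc2 : ∀ i : Fin n, c (2 * i.1) = A i := by
      intro i
      rw [hcdef]
      simp only
      rw [dif_pos (by omega : 2 * i.1 / 2 < n), if_pos (by omega : 2 * i.1 % 2 = 0)]
      simp_rw [show 2 * i.1 / 2 = i.1 by omega]
    have hc2' : ∀ i : Fin n, c (2 * i.1 + 1) = Bc i := by
      intro i
      rw [hcdef]
      simp only
      rw [dif_pos (by omega : (2 * i.1 + 1) / 2 < n),
        if_neg (by omega : ¬ (2 * i.1 + 1) % 2 = 0)]
      simp_rw [show (2 * i.1 + 1) / 2 = i.1 by omega]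
    have hρcont : ContinuousOn ρ (Set.Ioo (-ε₄) ε₄) := by
      intro y hy
      have hy4 : |y| < ε₄ := abs_lt.2 ⟨hy.1, hy.2⟩
      have hm1 : dist ((y, z) : YPQ n) 0 < εφ := by
        rw [dist_zero_right, Prod.norm_def]
        exact max_lt (by simpa [Real.norm_eq_abs] using lt_of_lt_of_le hy4 h4φ)
          (lt_of_lt_of_le hz h4φ)
      have hm2 : dist ((y, ψ z) : YPQ n) 0 < εφ' := by
        rw [dist_zero_right, Prod.norm_def]
        exact max_lt
          (by simpa [Real.norm_eq_abs] using lt_of_lt_of_le hy4 (le_trans h4δ' hδ'φ'))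
          (lt_of_lt_of_le hψzδ' hδ'φ')
      have hf1 : ContinuousAt (fun y : ℝ => ((y, z) : YPQ n)) y :=
        continuousAt_id.prodMk continuousAt_const
      have hf2 : ContinuousAt (fun y : ℝ => ((y, ψ z) : YPQ n)) y :=
        continuousAt_id.prodMk continuousAt_const
      have hc1 : ContinuousAt (fun y : ℝ => φ (y, z)) y :=
        ContinuousAt.comp' (hφc hm1).2 hf1
      have hc2c : ContinuousAt (fun y : ℝ => φ' (y, ψ z)) y :=
        ContinuousAt.comp' (hφ'c hm2).2 hf2
      exact (hc1.sub hc2c).continuousWithinAt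
    have hmain : ∀ y ∈ Set.Ioo (-ε₄) ε₄,
        (∑ k ∈ Finset.range (2 * n), c k * y ^ k) + ρ y * y ^ (2 * n) = 0 := by
      intro y hy
      have hy4 : |y| < ε₄ := abs_lt.2 ⟨hy.1, hy.2⟩
      have hcj := hconj2 y z (lt_of_lt_of_le hy4 h41) (lt_of_lt_of_le hz h41)
      rw [hgdef, hgdef'] at hcj
      simp only at hcj
      have hr : r y = r' y := hrr' y (lt_of_lt_of_le hy4 h43)
      have hsum : ∑ k ∈ Finset.range (2 * n), c k * y ^ k
          = ∑ i : Fin n, (A i * y ^ (2 * i.1) + Bc i * y ^ (2 * i.1 + 1)) := by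
        rw [sum_pairs, ← Fin.sum_univ_eq_sum_range
          (fun k => c (2 * k) * y ^ (2 * k) + c (2 * k + 1) * y ^ (2 * k + 1))]
        exact Finset.sum_congr rfl fun i _ => by rw [hc2 i, hc2' i]
      have hexpand : ∑ i : Fin n, (A i * y ^ (2 * i.1) + Bc i * y ^ (2 * i.1 + 1))
          = (∑ i : Fin n, ((z.1 i + Pt i z) * y ^ (2 * i.1) + Qt i z * y ^ (2 * i.1 + 1)))
            - ∑ i : Fin n, (((ψ z).1 i + Pt' i (ψ z)) * y ^ (2 * i.1)
                + Qt' i (ψ z) * y ^ (2 * i.1 + 1)) := by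
        rw [← Finset.sum_sub_distrib]
        refine Finset.sum_congr rfl fun i _ => ?_
        rw [hA, hBc]
        ring
      rw [hsum, hexpand, hρ]
      simp only
      linarith [hcj, hr]
    obtain ⟨hcoef, hρ0⟩ := poly_cancel hε₄pos (2 * n) c ρ hρcont hmain
    refine ⟨fun i => ?_, fun y hy => ?_⟩
    · have h1 := hcoef (2 * i.1) (by omega)
      have h2 := hcoef (2 * i.1 + 1) (by omega)
      rw [hc2 i] at h1
      rw [hc2' i] at h2
      rw [hA] at h1
      rw [hBc] at h2
      simp only at h1 h2
      constructor <;> linarith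
    · have := hρ0 y (by constructor <;> [linarith [abs_lt.1 hy]; linarith [abs_lt.1 hy]])
      rw [hρ] at this
      simp only at this
      linarith
  -- derivative fixes coordinates whose coordinate functions are fixed
  have hfixgen : ∀ ρ₀ : ℝ, 0 < ρ₀ → ρ₀ ≤ ε₁ → ∀ w : PQ n, ‖w‖ < ρ₀ → ∀ l : Fin n,
      ((∀ x : PQ n, ‖x‖ < ρ₀ → (ψ x).1 l = x.1 l) → ∀ u, (Dψ w u).1 l = u.1 l) ∧
      ((∀ x : PQ n, ‖x‖ < ρ₀ → (ψ x).2 l = x.2 l) → ∀ u, (Dψ w u).2 l = u.2 l) := by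
    intro ρ₀ hρ₀pos hρ₀ε₁ w hw l
    have hwball : w ∈ Metric.ball (0 : PQ n) ρ₀ := by rwa [Metric.mem_ball, dist_zero_right]
    have hwε₁ : ‖w‖ < ε₁ := lt_of_lt_of_le hw hρ₀ε₁
    constructor
    · intro hcoord u
      set π : PQ n →L[ℝ] ℝ := (ContinuousLinearMap.proj l).comp
        (ContinuousLinearMap.fst ℝ (Fin n → ℝ) (Fin n → ℝ)) with hπ
      have h1 : HasFDerivAt (fun x : PQ n => (ψ x).1 l) (π.comp (Dψ w)) w :=
        π.hasFDerivAt.comp w (hψd w hwε₁)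
      have hev : (fun x : PQ n => x.1 l) =ᶠ[𝓝 w] fun x : PQ n => (ψ x).1 l := by
        filter_upwards [Metric.isOpen_ball.mem_nhds hwball] with x hx
        rw [Metric.mem_ball, dist_zero_right] at hx
        exact (hcoord x hx).symm
      have h4 := (h1.congr_of_eventuallyEq hev).unique π.hasFDerivAt
      have h5 := congrArg (fun L : PQ n →L[ℝ] ℝ => L u) h4
      simpa [hπ, ContinuousLinearMap.comp_apply, ContinuousLinearMap.proj_apply,
        ContinuousLinearMap.coe_fst'] using h5
    · intro hcoord u
      set π : PQ n →L[ℝ] ℝ := (ContinuousLinearMap.proj l).comp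
        (ContinuousLinearMap.snd ℝ (Fin n → ℝ) (Fin n → ℝ)) with hπ
      have h1 : HasFDerivAt (fun x : PQ n => (ψ x).2 l) (π.comp (Dψ w)) w :=
        π.hasFDerivAt.comp w (hψd w hwε₁)
      have hev : (fun x : PQ n => x.2 l) =ᶠ[𝓝 w] fun x : PQ n => (ψ x).2 l := by
        filter_upwards [Metric.isOpen_ball.mem_nhds hwball] with x hx
        rw [Metric.mem_ball, dist_zero_right] at hx
        exact (hcoord x hx).symm
      have h4 := (h1.congr_of_eventuallyEq hev).unique π.hasFDerivAt
      have h5 := congrArg (fun L : PQ n →L[ℝ] ℝ => L u) h4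
      simpa [hπ, ContinuousLinearMap.comp_apply, ContinuousLinearMap.proj_apply,
        ContinuousLinearMap.coe_snd'] using h5
  -- the main induction: ψ fixes all coordinates
  have hind : ∀ m : ℕ, m ≤ n → ∀ l : Fin n, (l : ℕ) < m →
      ∀ᶠ z in 𝓝 (0 : PQ n), (ψ z).1 l = z.1 l ∧ (ψ z).2 l = z.2 l := by
    intro m
    induction m with
    | zero => exact fun _ l hl => absurd hl (by omega)
    | succ m ih =>
      intro hm l hl
      rcases Nat.lt_or_ge (l : ℕ) m with hlm | hlm
      · exact ih (by omega) l hlm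
      · have hlm' : m = (l : ℕ) := by omega
        subst hlm'
        have hIH : ∀ᶠ z in 𝓝 (0 : PQ n), ∀ l' : Fin n, (l' : ℕ) < (l : ℕ) →
            ((ψ z).1 l' = z.1 l' ∧ (ψ z).2 l' = z.2 l') := by
          rw [eventually_all]
          intro l'
          by_cases hl' : (l' : ℕ) < (l : ℕ)
          · exact (ih (by omega) l' hl').mono fun z hz _ => hz
          · exact Filter.Eventually.of_forall fun z h => absurd h hl'
        obtain ⟨ε₅, hε₅pos, h₅⟩ := Metric.eventually_nhds_iff.1 hIH
        set ε₆ := min ε₅ ε₄ with hε₆def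
        have hε₆pos : 0 < ε₆ := lt_min hε₅pos hε₄pos
        have h65 : ε₆ ≤ ε₅ := min_le_left _ _
        have h64 : ε₆ ≤ ε₄ := min_le_right _ _
        have h61 : ε₆ ≤ ε₁ := le_trans h64 h41
        have hIHb : ∀ x : PQ n, ‖x‖ < ε₆ → ∀ l' : Fin n, (l' : ℕ) < (l : ℕ) →
            ((ψ x).1 l' = x.1 l' ∧ (ψ x).2 l' = x.2 l') := fun x hx =>
          h₅ (by rw [dist_zero_right]; exact lt_of_lt_of_le hx h65)
        have hfix : ∀ w : PQ n, ‖w‖ < ε₆ → ∀ u : PQ n, ∀ l' : Fin n, (l' : ℕ) < (l : ℕ) →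
            ((Dψ w u).1 l' = u.1 l' ∧ (Dψ w u).2 l' = u.2 l') := by
          intro w hw u l' hl'
          have h := hfixgen ε₆ hε₆pos h61 w hw l'
          exact ⟨h.1 (fun x hx => (hIHb x hx l' hl').1) u,
            h.2 (fun x hx => (hIHb x hx l' hl').2) u⟩
        have hMfix : ∀ w : PQ n, ‖w‖ < ε₆ → ∀ v : PQ n,
            (∀ l' : Fin n, (l : ℕ) ≤ (l' : ℕ) → v.1 l' = 0 ∧ v.2 l' = 0) → Dψ w v = v :=
          fun w hw v hv => fixes_subspace (Dψ w) (hψω w (lt_of_lt_of_le hw h61)) (l : ℕ)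
            (fun u l' hl' => hfix w hw u l' hl') v hv
        -- P step
        have hP : ∀ z : PQ n, ‖z‖ < ε₆ → (ψ z).1 l = z.1 l := by
          intro z hz
          set z' : PQ n := (fun l' => if (l' : ℕ) < (l : ℕ) then 0 else z.1 l',
            fun l' => if (l' : ℕ) < (l : ℕ) then 0 else z.2 l') with hz'def
          have hz'norm : ‖z'‖ ≤ ‖z‖ := norm_mask_le z _ _
          have hz'6 : ‖z'‖ < ε₆ := lt_of_le_of_lt hz'norm hz
          have hz'4 : ‖z'‖ < ε₄ := lt_of_lt_of_le hz'6 h64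
          have hz'comp : ∀ l' : Fin n, (l' : ℕ) < (l : ℕ) → z'.1 l' = 0 ∧ z'.2 l' = 0 := by
            intro l' hl'
            constructor <;>
            · simp only [hz'def, Prod.fst_sub, Prod.snd_sub, Pi.sub_apply]
              rw [if_pos hl']
          have hPtz' : Pt l z' = 0 := by
            rw [((hsrc (by rw [dist_zero_right]; exact lt_of_lt_of_le hz'4 h4src)).1 l).1]
            refine Finset.sum_eq_zero fun j _ => ?_
            rw [genFun_eq_zero j.2 hz'comp, mul_zero]
          have hψz'δ : dist (ψ z') 0 < δ := by
            have h := (hsrc (by rw [dist_zero_right]; exact lt_of_lt_of_le hz'4 h4src)).2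
            rw [Metric.mem_ball] at h
            exact lt_of_lt_of_le h hδ'δ
          have hPt'z' : Pt' l (ψ z') = 0 := by
            rw [((hδ hψz'δ) l).1]
            refine Finset.sum_eq_zero fun j _ => ?_
            rw [genFun_congr j.2 (fun l' hl' => hIHb z' hz'6 l' hl'),
              genFun_eq_zero j.2 hz'comp, mul_zero]
          have hFz' : (ψ z').1 l - z'.1 l = 0 := by
            have h := ((hext z' hz'4).1 l).1
            rw [hPtz', hPt'z'] at h
            linarith
          have hdirzero : ∀ w ∈ Metric.ball (0 : PQ n) ε₆,
              ((((ContinuousLinearMap.proj l).comp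
                  (ContinuousLinearMap.fst ℝ (Fin n → ℝ) (Fin n → ℝ))).comp (Dψ w)
                - (ContinuousLinearMap.proj l).comp
                  (ContinuousLinearMap.fst ℝ (Fin n → ℝ) (Fin n → ℝ))) : PQ n →L[ℝ] ℝ)
                (z - z') = 0 := by
            intro w hw
            rw [Metric.mem_ball, dist_zero_right] at hw
            have hvz : Dψ w (z - z') = z - z' := by
              refine hMfix w hw _ fun l' hl' => ?_
              have h2 : ¬ ((l' : ℕ) < (l : ℕ)) := by omega
              constructor <;>
              · simp only [hz'def, Prod.fst_sub, Prod.snd_sub, Pi.sub_apply]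
                rw [if_neg h2, sub_self]
            rw [ContinuousLinearMap.sub_apply, ContinuousLinearMap.comp_apply, hvz, sub_self]
          have hcd := const_dir
            (f := fun x : PQ n => (ψ x).1 l - x.1 l)
            (f' := fun w => ((ContinuousLinearMap.proj l).comp
                (ContinuousLinearMap.fst ℝ (Fin n → ℝ) (Fin n → ℝ))).comp (Dψ w)
              - (ContinuousLinearMap.proj l).comp
                (ContinuousLinearMap.fst ℝ (Fin n → ℝ) (Fin n → ℝ)))
            (s := Metric.ball (0 : PQ n) ε₆) (convex_ball 0 ε₆)
            (fun w hw => by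
              rw [Metric.mem_ball, dist_zero_right] at hw
              exact (((ContinuousLinearMap.proj (R := ℝ) (φ := fun _ : Fin n => ℝ) l).comp
                (ContinuousLinearMap.fst ℝ (Fin n → ℝ) (Fin n → ℝ))).hasFDerivAt.comp w
                  (hψd w (lt_of_lt_of_le hw h61))).sub
                ((ContinuousLinearMap.proj l).comp
                  (ContinuousLinearMap.fst ℝ (Fin n → ℝ) (Fin n → ℝ))).hasFDerivAt)
            (x := z') (y := z)
            (by rw [Metric.mem_ball, dist_zero_right]; exact hz'6)
            (by rw [Metric.mem_ball, dist_zero_right]; exact hz) hdirzero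
          have hcd' : (ψ z).1 l - z.1 l = (ψ z').1 l - z'.1 l := hcd
          rw [hFz'] at hcd'
          linarith
        -- Q step
        have hQfix : ∀ w : PQ n, ‖w‖ < ε₆ → ∀ u : PQ n, (Dψ w u).1 l = u.1 l := by
          intro w hw u
          exact (hfixgen ε₆ hε₆pos h61 w hw l).1 (fun x hx => hP x hx) u
        have hQone : ∀ w : PQ n, ‖w‖ < ε₆ → (Dψ w ((0, Pi.single l 1) : PQ n)).2 l = 1 :=
          fun w hw => Mq_eq_one (Dψ w) (hψω w (lt_of_lt_of_le hw h61)) l (hQfix w hw)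
        have hQ : ∀ z : PQ n, ‖z‖ < ε₆ → (ψ z).2 l = z.2 l := by
          intro z hz
          set z'' : PQ n := (fun l' => if (l' : ℕ) < (l : ℕ) then 0 else z.1 l',
            fun l' => if (l' : ℕ) < (l : ℕ) + 1 then 0 else z.2 l') with hz''def
          have hz''norm : ‖z''‖ ≤ ‖z‖ := norm_mask_le z _ _
          have hz''6 : ‖z''‖ < ε₆ := lt_of_le_of_lt hz''norm hz
          have hz''4 : ‖z''‖ < ε₄ := lt_of_lt_of_le hz''6 h64
          have hz''comp : ∀ l' : Fin n, (l' : ℕ) < (l : ℕ) → z''.1 l' = 0 ∧ z''.2 l' = 0 := by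
            intro l' hl'
            constructor <;>
            · simp only [hz''def, Prod.fst_sub, Prod.snd_sub, Pi.sub_apply]
              first
              | rw [if_pos hl']
              | rw [if_pos (by omega : (l' : ℕ) < (l : ℕ) + 1)]
          have hQtz'' : Qt l z'' = 0 := by
            rw [((hsrc (by rw [dist_zero_right]; exact lt_of_lt_of_le hz''4 h4src)).1 l).2]
            refine Finset.sum_eq_zero fun j _ => ?_
            rcases Nat.lt_or_ge (j : ℕ) (2 * (l : ℕ)) with hj | hj
            · rw [genFun_eq_zero hj hz''comp, mul_zero]
            · have hje : (j : ℕ) = 2 * (l : ℕ) := by have := j.2; omega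
              rw [hje, genFun_two_mul]
              simp [hz''def, if_pos (by omega : (l : ℕ) < (l : ℕ) + 1)]
          have hψz''δ : dist (ψ z'') 0 < δ := by
            have h := (hsrc (by rw [dist_zero_right]; exact lt_of_lt_of_le hz''4 h4src)).2
            rw [Metric.mem_ball] at h
            exact lt_of_lt_of_le h hδ'δ
          have hQt'z'' : Qt' l (ψ z'')
              = cQ' l ⟨2 * (l : ℕ), by omega⟩ (ψ z'') * (ψ z'').2 l := by
            rw [((hδ hψz''δ) l).2.1]
            rw [Finset.sum_eq_single (⟨2 * (l : ℕ), by omega⟩ : Fin (2 * (l : ℕ) + 1))]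
            · simp only [Fin.val_mk]
              rw [genFun_two_mul]
            · intro b _ hb
              have hjlt : (b : ℕ) < 2 * (l : ℕ) := by
                have h2 := b.2
                have h3 : (b : ℕ) ≠ 2 * (l : ℕ) := fun hc => hb (Fin.ext hc)
                omega
              rw [genFun_congr hjlt (fun l' hl' => hIHb z'' hz''6 l' hl'),
                genFun_eq_zero hjlt hz''comp, mul_zero]
            · intro hmem; exact absurd (Finset.mem_univ _) hmem
          have hψz''2l : (ψ z'').2 l = 0 := by
            have hne := ((hδ hψz''δ) l).2.2
            have h := ((hext z'' hz''4).1 l).2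
            rw [hQtz'', hQt'z''] at h
            exact (mul_eq_zero.1 h).resolve_left hne
          set v₀ : PQ n := (fun l' => if (l' : ℕ) < (l : ℕ) then z.1 l' else 0,
            fun l' => if (l' : ℕ) < (l : ℕ) then z.2 l' else 0) with hv₀def
          have hveq : z - z'' = v₀ + z.2 l • ((0, Pi.single l 1) : PQ n) := by
            refine Prod.ext (funext fun l' => ?_) (funext fun l' => ?_)
            · simp only [Prod.fst_sub, Pi.sub_apply, Prod.fst_add, Pi.add_apply, hz''def, hv₀def,
                Prod.smul_fst, Pi.smul_apply, smul_eq_mul, Pi.zero_apply, mul_zero]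
              split_ifs <;> ring
            · simp only [Prod.snd_sub, Pi.sub_apply, Prod.snd_add, Pi.add_apply, hz''def, hv₀def,
                Prod.smul_snd, Pi.smul_apply, smul_eq_mul, Pi.single_apply]
              by_cases h1 : (l' : ℕ) < (l : ℕ)
              · have hne : l' ≠ l := fun hc => by rw [hc] at h1; omega
                rw [if_pos (by omega : (l' : ℕ) < (l : ℕ) + 1), if_pos h1, if_neg hne]
                ring
              · by_cases h2 : (l' : ℕ) = (l : ℕ)
                · have heq : l' = l := Fin.ext h2
                  rw [if_pos (by omega : (l' : ℕ) < (l : ℕ) + 1), if_neg h1, if_pos heq, heq]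
                  ring
                · have hne : l' ≠ l := fun hc => h2 (by rw [hc])
                  rw [if_neg (by omega : ¬ (l' : ℕ) < (l : ℕ) + 1), if_neg h1, if_neg hne]
                  ring
          have hdirzero : ∀ w ∈ Metric.ball (0 : PQ n) ε₆,
              ((((ContinuousLinearMap.proj l).comp
                  (ContinuousLinearMap.snd ℝ (Fin n → ℝ) (Fin n → ℝ))).comp (Dψ w)
                - (ContinuousLinearMap.proj l).comp
                  (ContinuousLinearMap.snd ℝ (Fin n → ℝ) (Fin n → ℝ))) : PQ n →L[ℝ] ℝ)
                (z - z'') = 0 := by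
            intro w hw
            rw [Metric.mem_ball, dist_zero_right] at hw
            have hv₀fix : Dψ w v₀ = v₀ := hMfix w hw v₀ (fun l' hl' => by
              have h2 : ¬ ((l' : ℕ) < (l : ℕ)) := by omega
              constructor <;>
              · simp only [hv₀def]
                rw [if_neg h2])
            rw [ContinuousLinearMap.sub_apply, ContinuousLinearMap.comp_apply, hveq, map_add,
              map_smul, hv₀fix]
            have h1 := hQone w hw
            simp [ContinuousLinearMap.comp_apply, ContinuousLinearMap.proj_apply,
              ContinuousLinearMap.coe_snd', Prod.snd_add, Pi.add_apply, Prod.smul_snd,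
              Pi.smul_apply, smul_eq_mul, h1, Pi.single_eq_same]
          have hcd := const_dir
            (f := fun x : PQ n => (ψ x).2 l - x.2 l)
            (f' := fun w => ((ContinuousLinearMap.proj l).comp
                (ContinuousLinearMap.snd ℝ (Fin n → ℝ) (Fin n → ℝ))).comp (Dψ w)
              - (ContinuousLinearMap.proj l).comp
                (ContinuousLinearMap.snd ℝ (Fin n → ℝ) (Fin n → ℝ)))
            (s := Metric.ball (0 : PQ n) ε₆) (convex_ball 0 ε₆)
            (fun w hw => by
              rw [Metric.mem_ball, dist_zero_right] at hw
              exact (((ContinuousLinearMap.proj (R := ℝ) (φ := fun _ : Fin n => ℝ) l).comp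
                (ContinuousLinearMap.snd ℝ (Fin n → ℝ) (Fin n → ℝ))).hasFDerivAt.comp w
                  (hψd w (lt_of_lt_of_le hw h61))).sub
                ((ContinuousLinearMap.proj l).comp
                  (ContinuousLinearMap.snd ℝ (Fin n → ℝ) (Fin n → ℝ))).hasFDerivAt)
            (x := z'') (y := z)
            (by rw [Metric.mem_ball, dist_zero_right]; exact hz''6)
            (by rw [Metric.mem_ball, dist_zero_right]; exact hz) hdirzero
          have hcd' : (ψ z).2 l - z.2 l = (ψ z'').2 l - z''.2 l := hcd
          have hz''2l : z''.2 l = 0 := by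
            simp [hz''def, if_pos (by omega : (l : ℕ) < (l : ℕ) + 1)]
          rw [hψz''2l, hz''2l] at hcd'
          linarith
        rw [Metric.eventually_nhds_iff]
        refine ⟨ε₆, hε₆pos, fun z hzd => ?_⟩
        rw [dist_zero_right] at hzd
        exact ⟨hP z hzd, hQ z hzd⟩
  -- assemble the conclusions
  have hid : ∀ᶠ z in 𝓝 (0 : PQ n), ψ z = z := by
    have hall : ∀ᶠ z in 𝓝 (0 : PQ n), ∀ l : Fin n, (ψ z).1 l = z.1 l ∧ (ψ z).2 l = z.2 l :=
      eventually_all.2 fun l => hind n le_rfl l l.2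
    filter_upwards [hall] with z hz
    exact Prod.ext (funext fun l => (hz l).1) (funext fun l => (hz l).2)
  obtain ⟨εid, hεidpos, hidb⟩ := Metric.eventually_nhds_iff.1 hid
  refine ⟨?_, ?_, ?_, ?_⟩
  · rw [Metric.eventually_nhds_iff]
    refine ⟨min ε₁ εr, lt_min hε₁pos hεrpos, fun y hyd => ?_⟩
    rw [Real.dist_eq, sub_zero] at hyd
    exact hrr' y hyd
  · rw [Metric.eventually_nhds_iff]
    refine ⟨min ε₄ εid, lt_min hε₄pos hεidpos, fun w hwd => ?_⟩
    rw [dist_zero_right, Prod.norm_def] at hwd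
    have hy4 : |w.1| < ε₄ := by
      rw [← Real.norm_eq_abs]
      exact lt_of_le_of_lt (le_max_left _ _) (lt_of_lt_of_le hwd (min_le_left _ _))
    have hz4 : ‖w.2‖ < ε₄ :=
      lt_of_le_of_lt (le_max_right _ _) (lt_of_lt_of_le hwd (min_le_left _ _))
    have hzid : ‖w.2‖ < εid :=
      lt_of_le_of_lt (le_max_right _ _) (lt_of_lt_of_le hwd (min_le_right _ _))
    have hid2 : ψ w.2 = w.2 := hidb (by rw [dist_zero_right]; exact hzid)
    have h := (hext w.2 hz4).2 w.1 hy4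
    rw [hid2] at h
    simpa using h
  · intro i
    rw [Metric.eventually_nhds_iff]
    refine ⟨min ε₄ εid, lt_min hε₄pos hεidpos, fun z hzd => ?_⟩
    rw [dist_zero_right] at hzd
    have hid2 : ψ z = z :=
      hidb (by rw [dist_zero_right]; exact lt_of_lt_of_le hzd (min_le_right _ _))
    have h := ((hext z (lt_of_lt_of_le hzd (min_le_left _ _))).1 i).1
    rw [hid2] at h
    linarith
  · intro i
    rw [Metric.eventually_nhds_iff]
    refine ⟨min ε₄ εid, lt_min hε₄pos hεidpos, fun z hzd => ?_⟩
    rw [dist_zero_right] at hzd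
    have hid2 : ψ z = z :=
      hidb (by rw [dist_zero_right]; exact lt_of_lt_of_le hzd (min_le_right _ _))
    have h := ((hext z (lt_of_lt_of_le hzd (min_le_left _ _))).1 i).2
    rw [hid2] at h
    exact h.symm
end
end

section
/- Let r₁ and r₂ be smooth germs of one real variable with r₁(0)=r₂(0)=0, r₁′(0) ≠ 0 and r₂′(0) ≠ 0. Suppose Ψ is a local symplectomorphism of dx∧dy on ℝ² whose second component equals y (i.e. Ψ(x,y) = (X(x,y), y) near 0) and such that (x² + r₂(y))∘Ψ = x² + r₁(y) on a neighbourhood of 0. Then Ψ is the identity map on a neighbourhood of 0 and r₁ = r₂ as germs at 0; in particular the function r in the planar normal form (f, H) = (y, {x² + r(y) = 0}) is a functional invariant. -/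
open Filter Topology

noncomputable section

/-- A local symplectomorphism of the area form `dx∧dy` on `ℝ²`: `Ψ(0) = 0`,
smooth near `0`, with `det DΨ(z) = 1` for all `z` near `0`. -/
def IsLocalSymp2 (Ψ : ℝ × ℝ → ℝ × ℝ) : Prop :=
  Ψ 0 = 0 ∧ SmoothGerm Ψ ∧
    ∀ᶠ z in 𝓝 (0 : ℝ × ℝ), (fderiv ℝ Ψ z).det = 1

/-- The Poisson bracket on `(ℝ², dx∧dy)`: `{F,G} = ∂ₓF·∂_yG − ∂_yF·∂ₓG`. -/
def pb2 (F G : ℝ × ℝ → ℝ) (z : ℝ × ℝ) : ℝ :=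
  fderiv ℝ F z (1, 0) * fderiv ℝ G z (0, 1) - fderiv ℝ F z (0, 1) * fderiv ℝ G z (1, 0)

/-- Determinant of a continuous linear endomorphism of `ℝ²` in coordinates. -/
lemma det2_aux (L : ℝ × ℝ →L[ℝ] ℝ × ℝ) :
    L.det = (L (1,0)).1 * (L (0,1)).2 - (L (0,1)).1 * (L (1,0)).2 := by
  have : L.det = LinearMap.det (L : ℝ × ℝ →ₗ[ℝ] ℝ × ℝ) := rfl
  rw [this, ← LinearMap.det_toMatrix (Module.Basis.finTwoProd ℝ), Matrix.det_fin_two]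
  simp [LinearMap.toMatrix_apply, Module.Basis.coe_finTwoProd_repr, Module.Basis.finTwoProd_zero,
    Module.Basis.finTwoProd_one]

/-- the function `r` in the planar normal form
`(f, H) = (y, {x² + r(y) = 0})` is a functional invariant: any local
symplectomorphism of `dx∧dy` fixing `y` and sending `x² + r₂(y)` to `x² + r₁(y)`
is the identity, and `r₁ = r₂` as germs. -/
theorem planar_invariant (r₁ r₂ : ℝ → ℝ)
    (hr₁sm : SmoothGerm r₁) (hr₂sm : SmoothGerm r₂)
    (hr₁0 : r₁ 0 = 0) (hr₂0 : r₂ 0 = 0)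
    (hr₁d : deriv r₁ 0 ≠ 0) (hr₂d : deriv r₂ 0 ≠ 0)
    (Ψ : ℝ × ℝ → ℝ × ℝ) (hΨ : IsLocalSymp2 Ψ)
    (hy : ∀ᶠ z in 𝓝 (0 : ℝ × ℝ), (Ψ z).2 = z.2)
    (hconj : ∀ᶠ z in 𝓝 (0 : ℝ × ℝ),
      (Ψ z).1 ^ 2 + r₂ ((Ψ z).2) = z.1 ^ 2 + r₁ z.2) :
    (∀ᶠ z in 𝓝 (0 : ℝ × ℝ), Ψ z = z) ∧ ∀ᶠ y in 𝓝 (0 : ℝ), r₁ y = r₂ y := by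
  obtain ⟨hΨ0, ⟨U, hU, hUsm⟩, hdet⟩ := hΨ
  set S : Set (ℝ × ℝ) := {z | (Ψ z).2 = z.2 ∧ (fderiv ℝ Ψ z).det = 1 ∧
      (Ψ z).1 ^ 2 + r₂ ((Ψ z).2) = z.1 ^ 2 + r₁ z.2} with hSdef
  have hS : S ∈ 𝓝 (0 : ℝ × ℝ) := by
    filter_upwards [hy, hdet, hconj] with z h1 h2 h3
    exact ⟨h1, h2, h3⟩
  set V : Set (ℝ × ℝ) := interior U ∩ interior S with hVdef
  have hVo : IsOpen V := isOpen_interior.inter isOpen_interior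
  have hV0 : (0 : ℝ × ℝ) ∈ V :=
    ⟨mem_interior_iff_mem_nhds.mpr hU, mem_interior_iff_mem_nhds.mpr hS⟩
  have hVS : V ⊆ S := fun z hz => interior_subset hz.2
  -- all points of V satisfy the key properties
  have key : ∀ z ∈ V, Ψ z = z := by
    intro z hz
    have hdiff : DifferentiableAt ℝ Ψ z :=
      ((hUsm.contDiffAt (mem_interior_iff_mem_nhds.mp hz.1)).differentiableAt (by simp))
    set D := fderiv ℝ Ψ z with hD
    have hFD : HasFDerivAt Ψ D z := hdiff.hasFDerivAt
    -- second component of the derivative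
    have hsndnear : (fun w => (Ψ w).2) =ᶠ[𝓝 z] Prod.snd := by
      filter_upwards [isOpen_interior.mem_nhds hz.2] with w hw
      exact (interior_subset hw).1
    have hsnd1 : HasFDerivAt (fun w => (Ψ w).2)
        ((ContinuousLinearMap.snd ℝ ℝ ℝ).comp D) z := hFD.snd
    have hsnd2 : HasFDerivAt (fun w => (Ψ w).2)
        (ContinuousLinearMap.snd ℝ ℝ ℝ) z :=
      hasFDerivAt_snd.congr_of_eventuallyEq hsndnear
    have hsndeq : (ContinuousLinearMap.snd ℝ ℝ ℝ).comp D
        = ContinuousLinearMap.snd ℝ ℝ ℝ := hsnd1.unique hsnd2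
    have hDsnd : ∀ v : ℝ × ℝ, (D v).2 = v.2 := by
      intro v
      have := congrArg (fun (L : ℝ × ℝ →L[ℝ] ℝ) => L v) hsndeq
      simpa using this
    -- from the determinant, ∂X/∂x = 1
    have hdet1 : D.det = 1 := (hVS hz).2.1
    have hDx : (D (1,0)).1 = 1 := by
      have := det2_aux D
      rw [hdet1] at this
      rw [hDsnd (1,0), hDsnd (0,1)] at this
      simpa using this.symm
    -- derivative of x ↦ Ψ (x, z.2) at z.1
    have hline : HasDerivAt (fun x : ℝ => ((x, z.2) : ℝ × ℝ)) ((1:ℝ), (0:ℝ)) z.1 :=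
      (hasDerivAt_id z.1).prodMk (hasDerivAt_const z.1 z.2)
    have hcomp : HasDerivAt (fun x : ℝ => Ψ (x, z.2)) (D (1,0)) z.1 :=
      hFD.comp_hasDerivAt z.1 hline
    have hX : HasDerivAt (fun x : ℝ => (Ψ (x, z.2)).1) ((D (1,0)).1) z.1 := hcomp.fst
    have hu : HasDerivAt (fun x : ℝ => (Ψ (x, z.2)).1 ^ 2 - x ^ 2)
        ((2:ℕ) * (Ψ (z.1, z.2)).1 ^ 1 * (D (1,0)).1 - (2:ℕ) * z.1 ^ 1) z.1 :=
      (hX.pow 2).sub (hasDerivAt_pow 2 z.1)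
    have hconst : (fun x : ℝ => (Ψ (x, z.2)).1 ^ 2 - x ^ 2)
        =ᶠ[𝓝 z.1] fun _ => r₁ z.2 - r₂ z.2 := by
      have hcont : Continuous (fun x : ℝ => ((x, z.2) : ℝ × ℝ)) :=
        continuous_id.prodMk continuous_const
      have hmem : {x : ℝ | ((x, z.2) : ℝ × ℝ) ∈ V} ∈ 𝓝 z.1 :=
        hcont.continuousAt.preimage_mem_nhds (hVo.mem_nhds hz)
      filter_upwards [hmem] with x hx
      have hs := hVS hx
      have h1 := hs.1
      have h3 := hs.2.2
      rw [h1] at h3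
      simp only at h3 ⊢
      linarith
    have hu0 : HasDerivAt (fun x : ℝ => (Ψ (x, z.2)).1 ^ 2 - x ^ 2) 0 z.1 :=
      (hasDerivAt_const z.1 (r₁ z.2 - r₂ z.2)).congr_of_eventuallyEq hconst
    have heq : (2:ℕ) * (Ψ (z.1, z.2)).1 ^ 1 * (D (1,0)).1 - (2:ℕ) * z.1 ^ 1 = 0 :=
      hu.unique hu0
    rw [hDx] at heq
    have hz1 : (Ψ z).1 = z.1 := by
      have : (Ψ (z.1, z.2)).1 = z.1 := by push_cast at heq; nlinarith [heq]
      simpa using this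
    have hz2 : (Ψ z).2 = z.2 := (hVS hz).1
    exact Prod.ext hz1 hz2
  constructor
  · filter_upwards [hVo.mem_nhds hV0] with z hz using key z hz
  · have hcont : Continuous (fun y : ℝ => ((0, y) : ℝ × ℝ)) :=
      continuous_const.prodMk continuous_id
    have hmem : {y : ℝ | ((0, y) : ℝ × ℝ) ∈ V} ∈ 𝓝 (0 : ℝ) := by
      have := hcont.continuousAt (x := (0:ℝ)).preimage_mem_nhds (hVo.mem_nhds hV0)
      exact this
    filter_upwards [hmem] with y hy'
    have h3 := (hVS hy').2.2
    rw [key _ hy'] at h3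
    simp at h3
    linarith
end
end
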